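/- Assume the primitive divisor hypothesis. Let m, k, n ≥ 1 be integers such that the ideals c_k and c_m are coprime (c_k + c_m = O_K), c_n divides c_k³·c_m³, and c_m·c_k divides c_n. Then gcd(k, m) = 1 and n = m·k. -/

import Mathlib

open IsDedekindDomain IsDedekindDomain.HeightOneSpectrum NumberField WeierstrassCurve Filter

open scoped Classical in
/-- The normalized additive valuation of `K` at the prime `q` (with `ordAt q 0 = 0`). -/
noncomputable def ordAt {K : Type*} [Field K] [NumberField K]
    (q : HeightOneSpectrum (𝓞 K)) (z : K) : ℤ :=
  if hz : z = 0 then 0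
  else -Multiplicative.toAdd (WithZero.unzero ((q.valuation K).ne_zero_iff.mpr hz))

theorem aux_ordAt_neg_iff {K : Type*} [Field K] [NumberField K]
    (q : HeightOneSpectrum (𝓞 K)) (z : K) :
    ordAt q z < 0 ↔ 1 < q.valuation K z := by
  rw [ordAt]
  split_ifs with hz
  · subst hz
    rw [Valuation.map_zero]
    exact iff_of_false (lt_irrefl 0) (not_lt.mpr zero_le')
  · have hne : q.valuation K z ≠ 0 := (q.valuation K).ne_zero_iff.mpr hz
    obtain ⟨u, hu⟩ : ∃ u : Multiplicative ℤ, q.valuation K z = ↑u :=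
      ⟨WithZero.unzero hne, (WithZero.coe_unzero hne).symm⟩
    simp only [hu, WithZero.unzero_coe, neg_lt_zero, ← WithZero.coe_one, WithZero.coe_lt_coe,
      ← Multiplicative.toAdd_lt, toAdd_one]

theorem aux_sq_le {Γ : Type*} [LinearOrderedCommGroupWithZero Γ] {s t : Γ}
    (h : s ^ 2 ≤ t ^ 2) : s ≤ t := by
  by_contra hc
  push_neg at hc
  refine absurd h (not_le.mpr ?_)
  calc t ^ 2 ≤ t * s := by rw [sq]; exact mul_le_mul_right hc.le t
    _ = s * t := mul_comm t s
    _ < s * s := mul_lt_mul_of_pos_left hc (zero_le'.trans_lt hc)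
    _ = s ^ 2 := (sq s).symm

theorem aux_one_le_sq {Γ : Type*} [LinearOrderedCommGroupWithZero Γ] {u : Γ}
    (h : 1 ≤ u) : 1 ≤ u ^ 2 := by
  calc (1:Γ) = 1 * 1 := (one_mul 1).symm
  _ ≤ u * u := mul_le_mul' h h
  _ = u ^ 2 := (sq u).symm

theorem aux_le_sq {Γ : Type*} [LinearOrderedCommGroupWithZero Γ] {u : Γ}
    (h : 1 ≤ u) : u ≤ u ^ 2 := by
  calc u = u * 1 := (mul_one u).symm
  _ ≤ u * u := mul_le_mul_right h u
  _ = u ^ 2 := (sq u).symm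

/-- Key valuation estimate: the sum of a point which is "close to the origin" (pole of `x` at
`q`) and a point which is integral at `q` is integral at `q`. -/
theorem aux_key_val {K : Type*} [Field K] {Γ : Type*} [LinearOrderedCommGroupWithZero Γ]
    (v : Valuation K Γ) {a b x₁ y₁ x₂ y₂ : K}
    (e₁ : y₁ ^ 2 = x₁ ^ 3 + a * x₁ + b) (e₂ : y₂ ^ 2 = x₂ ^ 3 + a * x₂ + b)
    (ha : v a ≤ 1) (hb : v b ≤ 1) (h₁ : 1 < v x₁) (h₂ : v x₂ ≤ 1) :
    v (((y₁ - y₂) / (x₁ - x₂)) ^ 2 - x₁ - x₂) ≤ 1 := by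
  set u := v x₁ with hu
  have hu1 : (1 : Γ) ≤ u := h₁.le
  have hu0 : u ≠ 0 := (zero_le_one.trans_lt h₁).ne'
  have hx12 : x₁ ≠ x₂ := fun h => absurd h₂ (not_le.mpr (h ▸ h₁))
  have huu : u ≤ u ^ 2 := aux_le_sq hu1
  have hu4 : u ^ 2 ≤ (u ^ 2) ^ 2 := aux_le_sq (aux_one_le_sq hu1)
  have hy₂ : v y₂ ≤ 1 := by
    have h2 : v (y₂ ^ 2) ≤ 1 := by
      rw [e₂]
      refine le_trans (v.map_add _ _) (max_le (le_trans (v.map_add _ _) (max_le ?_ ?_)) hb)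
      · rw [v.map_pow]; exact pow_le_one₀ zero_le' h₂
      · rw [v.map_mul]; exact mul_le_one' ha h₂
    rw [v.map_pow] at h2
    exact aux_sq_le (by simpa using h2)
  have hy₁ : v y₁ ≤ u ^ 2 := by
    have h4 : v (y₁ ^ 2) ≤ (u ^ 2) ^ 2 := by
      rw [e₁]
      refine le_trans (v.map_add _ _) (max_le (le_trans (v.map_add _ _) (max_le ?_ ?_)) ?_)
      · rw [v.map_pow, ← hu]
        calc u ^ 3 = u ^ 2 * u := pow_succ u 2
        _ ≤ u ^ 2 * u ^ 2 := mul_le_mul_right huu _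
        _ = (u ^ 2) ^ 2 := (sq (u^2)).symm
      · rw [v.map_mul, ← hu]
        calc v a * u ≤ 1 * u := mul_le_mul_left ha u
        _ = u := one_mul u
        _ ≤ u ^ 2 := huu
        _ ≤ (u ^ 2) ^ 2 := hu4
      · exact hb.trans ((aux_one_le_sq hu1).trans hu4)
    rw [v.map_pow] at h4
    exact aux_sq_le h4
  have hsub : v (x₁ - x₂) = u := v.map_sub_eq_of_lt_left (h₂.trans_lt h₁)
  have hne : x₁ - x₂ ≠ 0 := sub_ne_zero.mpr hx12
  have hiden : ((y₁ - y₂) / (x₁ - x₂)) ^ 2 - x₁ - x₂ =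
      (a * x₁ + a * x₂ + (b + b) - (y₁ * y₂ + y₁ * y₂) + x₁ ^ 2 * x₂ + x₁ * x₂ ^ 2)
        / (x₁ - x₂) ^ 2 := by
    have hd2 : (x₁ - x₂) ^ 2 ≠ 0 := pow_ne_zero _ hne
    rw [div_pow, eq_div_iff hd2, sub_mul, sub_mul, div_mul_cancel₀ _ hd2]
    linear_combination e₁ + e₂
  rw [hiden, map_div₀, v.map_pow, hsub]
  have hnum : v (a * x₁ + a * x₂ + (b + b) - (y₁ * y₂ + y₁ * y₂) + x₁ ^ 2 * x₂ + x₁ * x₂ ^ 2)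
      ≤ u ^ 2 := by
    have t1 : v (a * x₁) ≤ u ^ 2 := by
      rw [v.map_mul]; exact le_trans (mul_le_mul_left ha u) (by rw [one_mul]; exact huu)
    have t2 : v (a * x₂) ≤ u ^ 2 := by
      rw [v.map_mul]
      exact le_trans (mul_le_one' ha h₂) (aux_one_le_sq hu1)
    have t3 : v (b + b) ≤ u ^ 2 :=
      le_trans (v.map_add _ _)
        (max_le (hb.trans (aux_one_le_sq hu1)) (hb.trans (aux_one_le_sq hu1)))
    have t4 : v (y₁ * y₂) ≤ u ^ 2 := by
      rw [v.map_mul]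
      exact le_trans (mul_le_mul' hy₁ hy₂) (by rw [mul_one])
    have t5 : v (x₁ ^ 2 * x₂) ≤ u ^ 2 := by
      rw [v.map_mul, v.map_pow, ← hu]
      exact le_trans (mul_le_mul' le_rfl h₂) (by rw [mul_one])
    have t6 : v (x₁ * x₂ ^ 2) ≤ u ^ 2 := by
      rw [v.map_mul, v.map_pow, ← hu]
      refine le_trans (mul_le_mul' le_rfl (pow_le_one₀ zero_le' h₂)) (by rw [mul_one]; exact huu)
    refine le_trans (v.map_add _ _) (max_le (le_trans (v.map_add _ _) (max_le ?_ t5)) t6)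
    refine le_trans (v.map_sub _ _) (max_le (le_trans (v.map_add _ _) (max_le ?_ t3)) ?_)
    · exact le_trans (v.map_add _ _) (max_le t1 t2)
    · exact le_trans (v.map_add _ _) (max_le t4 t4)
  rw [div_eq_mul_inv]
  calc v _ * (u ^ 2)⁻¹ ≤ u ^ 2 * (u ^ 2)⁻¹ := mul_le_mul_left hnum _
  _ = 1 := mul_inv_cancel₀ (pow_ne_zero 2 hu0)

/-- A divisibility criterion via prime powers. -/
theorem aux_nat_dvd {M N : ℕ} (hM : M ≠ 0) (hN : N ≠ 0)
    (h : ∀ p e : ℕ, p.Prime → 1 ≤ e → p ^ e ∣ M → p ^ e ∣ N) : M ∣ N := by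
  rw [← Nat.factorization_le_iff_dvd hM hN, Finsupp.le_def]
  intro p
  by_cases hp : p.Prime
  · rcases Nat.eq_zero_or_pos (M.factorization p) with h0 | h1
    · simp [h0]
    · exact (Nat.Prime.pow_dvd_iff_le_factorization hp hN).mp
        (h p (M.factorization p) hp h1 (Nat.ordProj_dvd M p))
  · simp [Nat.factorization_eq_zero_of_not_prime M hp]

open scoped Classical in
theorem stmt_12
    (K : Type) [Field K] [NumberField K]
    (a b : 𝓞 K)
    (W : WeierstrassCurve.Affine K)
    (hW : W = { a₁ := 0, a₂ := 0, a₃ := 0, a₄ := algebraMap (𝓞 K) K a,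
                a₆ := algebraMap (𝓞 K) K b })
    (P : W.Point) (hP : ¬ IsOfFinAddOrder P)
    (x y : ℤ → K)
    (hxy : ∀ n : ℤ, n ≠ 0 → ∃ h : W.Nonsingular (x n) (y n),
      n • P = WeierstrassCurve.Affine.Point.some _ _ h)
    (Sbad : Set (HeightOneSpectrum (𝓞 K)))
    (hSbadFin : Sbad.Finite)
    (hSbadRam : ∀ q : HeightOneSpectrum (𝓞 K),
      (∃ p : ℕ, p.Prime ∧ q.asIdeal ^ 2 ∣ Ideal.span {(p : 𝓞 K)}) → q ∈ Sbad)
    (hSbad2 : ∀ q : HeightOneSpectrum (𝓞 K), (2 : 𝓞 K) ∈ q.asIdeal → q ∈ Sbad)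
    (hSbadSing : ∀ q : HeightOneSpectrum (𝓞 K),
      (-16 * (4 * a ^ 3 + 27 * b ^ 2) : 𝓞 K) ∈ q.asIdeal → q ∈ Sbad)
    (hSbadP : ∀ q : HeightOneSpectrum (𝓞 K),
      (ordAt q (x 1) < 0 ∨ ordAt q (y 1) < 0) → q ∈ Sbad)
    (S : ℤ → Set (HeightOneSpectrum (𝓞 K)))
    (hS : ∀ n : ℤ, n ≠ 0 →
      S n = {q : HeightOneSpectrum (𝓞 K) | q ∉ Sbad ∧ ordAt q (x n) < 0})
    (hPrim : ∀ ℓ : ℕ, ℓ.Prime → ∀ j : ℕ, 1 ≤ j →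
      ((S ((ℓ : ℤ) ^ j)) \ (S ((ℓ : ℤ) ^ (j - 1)))).Nonempty)
    (V : Set (HeightOneSpectrum (𝓞 K)))
    (hV : V = {q : HeightOneSpectrum (𝓞 K) | q ∉ Sbad ∧ ∃ ℓ : ℕ, ℓ.Prime ∧
      ∃ j : ℕ, 1 ≤ j ∧ {n : ℤ | n = 0 ∨ q ∈ S n} = {n : ℤ | (ℓ : ℤ) ^ j ∣ n}})
    (c : ℤ → Ideal (𝓞 K))
    (Tc : ℤ → Finset (HeightOneSpectrum (𝓞 K)))
    (hTc : ∀ n : ℤ, 1 ≤ n → (Tc n : Set (HeightOneSpectrum (𝓞 K))) = V ∩ S n)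
    (hc : ∀ n : ℤ, 1 ≤ n →
      c n = ∏ q ∈ Tc n, q.asIdeal ^ (-(ordAt q (x n))).toNat)
    :
    ∀ m k n : ℤ, 1 ≤ m → 1 ≤ k → 1 ≤ n →
      c k ⊔ c m = ⊤ → c n ∣ c k ^ 3 * c m ^ 3 → c m * c k ∣ c n →
      Int.gcd k m = 1 ∧ n = m * k := by
  subst hW
  -- the Weierstrass equation satisfied by the coordinates of multiples of P
  have heq : ∀ n : ℤ, n ≠ 0 → (y n) ^ 2 =
      (x n) ^ 3 + (algebraMap (𝓞 K) K a) * x n + algebraMap (𝓞 K) K b := by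
    intro n hn
    obtain ⟨h, -⟩ := hxy n hn
    have h1 := h.1
    rw [WeierstrassCurve.Affine.equation_iff] at h1
    simpa using h1
  -- closure of poles under addition
  have hadd : ∀ (q : HeightOneSpectrum (𝓞 K)) (m' n' : ℤ), m' ≠ 0 → n' ≠ 0 → m' + n' ≠ 0 →
      1 < q.valuation K (x m') → 1 < q.valuation K (x n') → 1 < q.valuation K (x (m' + n')) := by
    intro q m' n' hm' hn' hmn' h1 h2
    by_contra hcon
    push_neg at hcon
    obtain ⟨hNm, hsm⟩ := hxy m' hm'
    obtain ⟨hNn, hsn⟩ := hxy n' hn'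
    obtain ⟨hNmn, hsmn⟩ := hxy (m' + n') hmn'
    have hxne : x n' ≠ x (m' + n') := fun h => absurd hcon (not_le.mpr (h ▸ h2))
    have hsum : WeierstrassCurve.Affine.Point.some _ _ ((Affine.nonsingular_neg ..).mpr hNn) +
        WeierstrassCurve.Affine.Point.some _ _ hNmn = WeierstrassCurve.Affine.Point.some _ _ hNm := by
      calc WeierstrassCurve.Affine.Point.some _ _ ((Affine.nonsingular_neg ..).mpr hNn) +
          WeierstrassCurve.Affine.Point.some _ _ hNmn = -(n' • P) + (m' + n') • P := by
            rw [hsn, hsmn, WeierstrassCurve.Affine.Point.neg_some]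
      _ = (-n' + (m' + n')) • P := by rw [← neg_zsmul, ← add_zsmul]
      _ = m' • P := by rw [show -n' + (m' + n') = m' by ring]
      _ = WeierstrassCurve.Affine.Point.some _ _ hNm := hsm
    rw [WeierstrassCurve.Affine.Point.add_of_X_ne hxne] at hsum
    have hx3 := (WeierstrassCurve.Affine.Point.some.inj hsum).1
    rw [WeierstrassCurve.Affine.addX, WeierstrassCurve.Affine.slope_of_X_ne hxne] at hx3
    simp only [WeierstrassCurve.Affine.negY, zero_mul, add_zero, sub_zero, neg_zero,
      zero_sub, zero_add, mul_zero, neg_neg] at hx3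
    have e₁ : (-(y n')) ^ 2 =
        (x n') ^ 3 + (algebraMap (𝓞 K) K a) * x n' + algebraMap (𝓞 K) K b := by
      rw [neg_sq]; exact heq n' hn'
    have := aux_key_val (q.valuation K) e₁ (heq (m' + n') hmn')
      (q.valuation_le_one a) (q.valuation_le_one b) h2 hcon
    rw [hx3] at this
    exact absurd this (not_le.mpr h1)
  -- negation invariance of x
  have hxneg : ∀ n : ℤ, n ≠ 0 → x (-n) = x n := by
    intro n hn
    obtain ⟨hN, hs⟩ := hxy n hn
    obtain ⟨hN', hs'⟩ := hxy (-n) (neg_ne_zero.mpr hn)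
    have : WeierstrassCurve.Affine.Point.some _ _ hN' =
        WeierstrassCurve.Affine.Point.some _ _ ((Affine.nonsingular_neg ..).mpr hN) := by
      rw [← hs', ← WeierstrassCurve.Affine.Point.neg_some, ← hs, ← neg_zsmul]
      exact hN
    exact (WeierstrassCurve.Affine.Point.some.inj this).1
  -- key existence: for every prime power ℓ^j there is q ∈ V with pole set exactly ℓ^j ℤ
  have hVmem : ∀ ℓ : ℕ, ℓ.Prime → ∀ j : ℕ, 1 ≤ j → ∃ q : HeightOneSpectrum (𝓞 K),
      q ∈ V ∧ {n : ℤ | n = 0 ∨ q ∈ S n} = {n : ℤ | (ℓ : ℤ) ^ j ∣ n} := by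
    intro ℓ hℓ j hj
    obtain ⟨q, hqmem, hqnot⟩ := hPrim ℓ hℓ j hj
    have hℓ0 : ((ℓ : ℤ)) ≠ 0 := Int.natCast_ne_zero.mpr hℓ.ne_zero
    have hpj0 : ((ℓ : ℤ)) ^ j ≠ 0 := pow_ne_zero _ hℓ0
    have hpj10 : ((ℓ : ℤ)) ^ (j - 1) ≠ 0 := pow_ne_zero _ hℓ0
    rw [hS _ hpj0] at hqmem
    obtain ⟨hqSbad, hqord⟩ := hqmem
    -- the pole set as an additive subgroup of ℤ
    set Mset : Set ℤ := {n | n = 0 ∨ 1 < q.valuation K (x n)} with hMset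
    have hMadd : ∀ {m' n' : ℤ}, m' ∈ Mset → n' ∈ Mset → m' + n' ∈ Mset := by
      intro m' n' hm' hn'
      rcases eq_or_ne m' 0 with rfl | hm0
      · rw [zero_add]; exact hn'
      rcases eq_or_ne n' 0 with rfl | hn0
      · rw [add_zero]; exact hm'
      rcases eq_or_ne (m' + n') 0 with h0 | hmn0
      · exact Or.inl h0
      rcases hm' with h | hv1
      · exact absurd h hm0
      rcases hn' with h | hv2
      · exact absurd h hn0
      exact Or.inr (hadd q m' n' hm0 hn0 hmn0 hv1 hv2)
    have hMneg : ∀ {n' : ℤ}, n' ∈ Mset → -n' ∈ Mset := by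
      intro n' hn'
      rcases eq_or_ne n' 0 with rfl | hn0
      · exact Or.inl (by simp)
      rcases hn' with h | hv
      · exact absurd h hn0
      exact Or.inr (by rw [hxneg n' hn0]; exact hv)
    set Msub : AddSubgroup ℤ := ⟨⟨⟨Mset, hMadd⟩, Or.inl rfl⟩, hMneg⟩ with hMsub
    obtain ⟨d, hd⟩ := Int.subgroup_cyclic Msub
    have hmemM : ∀ nn : ℤ, nn ∈ Mset ↔ d ∣ nn := by
      intro nn
      have : nn ∈ Msub ↔ nn ∈ AddSubgroup.closure {d} := by rw [hd]
      rw [← AddSubgroup.zmultiples_eq_closure, Int.mem_zmultiples_iff] at this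
      exact this
    -- the pole set of q equals {n | n = 0 ∨ q ∈ S n}
    have hMS : {n : ℤ | n = 0 ∨ q ∈ S n} = Mset := by
      ext nn
      rcases eq_or_ne nn 0 with rfl | hnn0
      · simp [hMset]
      · simp only [Set.mem_setOf_eq, hMset, hnn0, false_or]
        rw [hS nn hnn0]
        simp only [Set.mem_setOf_eq, aux_ordAt_neg_iff]
        exact ⟨fun h => h.2, fun h => ⟨hqSbad, h⟩⟩
    have hin : ((ℓ : ℤ)) ^ j ∈ Mset := Or.inr ((aux_ordAt_neg_iff q _).mp hqord)
    have hnotin : ((ℓ : ℤ)) ^ (j - 1) ∉ Mset := by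
      intro hcon
      rcases hcon with h | hv
      · exact hpj10 h
      · refine hqnot ?_
        rw [hS _ hpj10]
        exact ⟨hqSbad, (aux_ordAt_neg_iff q _).mpr hv⟩
    -- identify d up to sign with ℓ^j
    have hd1 : d ∣ (ℓ : ℤ) ^ j := (hmemM _).mp hin
    have hd2 : ¬ d ∣ (ℓ : ℤ) ^ (j - 1) := fun h => hnotin ((hmemM _).mpr h)
    have hdnat : d.natAbs ∣ ℓ ^ j := by
      have := Int.natAbs_dvd_natAbs.mpr hd1
      simpa [Int.natAbs_pow] using this
    obtain ⟨i, hij, hdi⟩ := (Nat.dvd_prime_pow hℓ).mp hdnat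
    have hij : i = j := by
      by_contra hne
      have hij1 : i ≤ j - 1 := by omega
      refine hd2 ?_
      have : (d.natAbs : ℤ) ∣ (ℓ : ℤ) ^ (j - 1) := by
        rw [hdi]
        exact_mod_cast pow_dvd_pow (ℓ : ℤ) hij1
      exact (Int.natAbs_dvd).mp this
    have hdval : (d.natAbs : ℤ) = (ℓ : ℤ) ^ j := by
      rw [hdi, hij]; push_cast; ring
    have hsetq : {n : ℤ | n = 0 ∨ q ∈ S n} = {n : ℤ | (ℓ : ℤ) ^ j ∣ n} := by
      rw [hMS]
      ext nn
      simp only [Set.mem_setOf_eq]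
      rw [hmemM nn, show (d ∣ nn) ↔ ((d.natAbs : ℤ) ∣ nn) from (Int.natAbs_dvd).symm, hdval]
    refine ⟨q, ?_, hsetq⟩
    rw [hV]
    exact ⟨hqSbad, ℓ, hℓ, j, hj, hsetq⟩
  -- divisibility of c n by a prime q from hVmem
  have hcdvd : ∀ (q : HeightOneSpectrum (𝓞 K)) (ℓ j : ℕ), q ∈ V →
      {n : ℤ | n = 0 ∨ q ∈ S n} = {n : ℤ | (ℓ : ℤ) ^ j ∣ n} →
      ∀ n : ℤ, 1 ≤ n → (q.asIdeal ∣ c n ↔ (ℓ : ℤ) ^ j ∣ n) := by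
    intro q ℓ j hqV hqset n hn1
    have hn0 : n ≠ 0 := by omega
    have hqprime : Prime q.asIdeal := Ideal.prime_of_isPrime q.ne_bot q.isPrime
    constructor
    · intro hdvd
      rw [hc n hn1] at hdvd
      obtain ⟨p, hpTc, hpd⟩ := hqprime.exists_mem_finset_dvd hdvd
      have hqp : q = p := by
        have h1 : q.asIdeal ∣ p.asIdeal := hqprime.dvd_of_dvd_pow hpd
        have h2 : p.asIdeal ≤ q.asIdeal := Ideal.le_of_dvd h1
        have h3 : p.asIdeal.IsMaximal := Ideal.IsPrime.isMaximal p.isPrime p.ne_bot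
        have h4 : p.asIdeal = q.asIdeal := h3.eq_of_le q.isPrime.ne_top h2
        exact (IsDedekindDomain.HeightOneSpectrum.ext h4).symm
      subst hqp
      have hqS : q ∈ S n := by
        have : q ∈ (Tc n : Set (HeightOneSpectrum (𝓞 K))) := hpTc
        rw [hTc n hn1] at this
        exact this.2
      have : n ∈ {n : ℤ | n = 0 ∨ q ∈ S n} := Or.inr hqS
      rw [hqset] at this
      exact this
    · intro hdvd
      have hmem : n ∈ {n : ℤ | n = 0 ∨ q ∈ S n} := by rw [hqset]; exact hdvd
      have hqS : q ∈ S n := by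
        rcases hmem with h | h
        · exact absurd h hn0
        · exact h
      have hqTc : q ∈ Tc n := by
        rw [← Finset.mem_coe, hTc n hn1]
        exact ⟨hqV, hqS⟩
      have hordneg : ordAt q (x n) < 0 := by
        have := hqS
        rw [hS n hn0] at this
        exact this.2
      have hexp : (-(ordAt q (x n))).toNat ≠ 0 := by omega
      calc q.asIdeal ∣ q.asIdeal ^ (-(ordAt q (x n))).toNat := dvd_pow_self _ hexp
      _ ∣ ∏ p ∈ Tc n, p.asIdeal ^ (-(ordAt p (x n))).toNat := Finset.dvd_prod_of_mem _ hqTc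
      _ = c n := (hc n hn1).symm
  -- main argument
  intro m k n hm hk hn hcop hdvd1 hdvd2
  have hm0 : m ≠ 0 := by omega
  have hk0 : k ≠ 0 := by omega
  have hn0 : n ≠ 0 := by omega
  -- gcd k m = 1
  have hgcd : Int.gcd k m = 1 := by
    by_contra hg
    obtain ⟨p, hp, hpd⟩ := Nat.exists_prime_and_dvd hg
    have hpk : (p : ℤ) ∣ k := by
      have : p ∣ k.natAbs := hpd.trans (Nat.gcd_dvd_left _ _)
      exact Int.natAbs_dvd_natAbs.mp (by simpa using this)
    have hpm : (p : ℤ) ∣ m := by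
      have : p ∣ m.natAbs := hpd.trans (Nat.gcd_dvd_right _ _)
      exact Int.natAbs_dvd_natAbs.mp (by simpa using this)
    obtain ⟨q, hqV, hqset⟩ := hVmem p hp 1 le_rfl
    have h1 : q.asIdeal ∣ c k := (hcdvd q p 1 hqV hqset k hk).mpr (by simpa using hpk)
    have h2 : q.asIdeal ∣ c m := (hcdvd q p 1 hqV hqset m hm).mpr (by simpa using hpm)
    have : (⊤ : Ideal (𝓞 K)) ≤ q.asIdeal := by
      rw [← hcop]
      exact sup_le (Ideal.le_of_dvd h1) (Ideal.le_of_dvd h2)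
    exact q.isPrime.ne_top (top_le_iff.mp this)
  refine ⟨hgcd, ?_⟩
  -- pass to natural numbers
  have hmk1 : 1 ≤ m * k := by nlinarith
  have hcopnat : Nat.Coprime k.toNat m.toNat := by
    have h1 : k.natAbs = k.toNat := by omega
    have h2 : m.natAbs = m.toNat := by omega
    rw [Nat.Coprime, ← h1, ← h2]
    exact hgcd
  have hMne : m.toNat ≠ 0 := by omega
  have hKne : k.toNat ≠ 0 := by omega
  have hNne : n.toNat ≠ 0 := by omega
  have hmc : (m.toNat : ℤ) = m := Int.toNat_of_nonneg (by omega)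
  have hkc : (k.toNat : ℤ) = k := Int.toNat_of_nonneg (by omega)
  have hnc : (n.toNat : ℤ) = n := Int.toNat_of_nonneg (by omega)
  have hbridge : ∀ (p e : ℕ) (z : ℤ), (z.toNat : ℤ) = z → (p ^ e ∣ z.toNat ↔ (p : ℤ) ^ e ∣ z) := by
    intro p e z hz
    constructor
    · intro h
      have := Int.natCast_dvd_natCast.mpr h
      push_cast at this
      rwa [hz] at this
    · intro h
      have : ((p ^ e : ℕ) : ℤ) ∣ (z.toNat : ℤ) := by push_cast; rwa [hz]
      exact_mod_cast this
  -- n ∣ m * k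
  have hNMK : n.toNat ∣ m.toNat * k.toNat := by
    refine aux_nat_dvd hNne (Nat.mul_ne_zero hMne hKne) ?_
    intro p e hp he hpe
    obtain ⟨q, hqV, hqset⟩ := hVmem p hp e he
    have hqprime : Prime q.asIdeal := Ideal.prime_of_isPrime q.ne_bot q.isPrime
    have hq_n : q.asIdeal ∣ c n :=
      (hcdvd q p e hqV hqset n hn).mpr ((hbridge p e n hnc).mp hpe)
    have hqprod : q.asIdeal ∣ c k ^ 3 * c m ^ 3 := hq_n.trans hdvd1
    rcases hqprime.dvd_mul.mp hqprod with h | h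
    · have hqk : q.asIdeal ∣ c k := hqprime.dvd_of_dvd_pow h
      have : (p : ℤ) ^ e ∣ k := (hcdvd q p e hqV hqset k hk).mp hqk
      exact Dvd.dvd.mul_left ((hbridge p e k hkc).mpr this) m.toNat
    · have hqm : q.asIdeal ∣ c m := hqprime.dvd_of_dvd_pow h
      have : (p : ℤ) ^ e ∣ m := (hcdvd q p e hqV hqset m hm).mp hqm
      exact Dvd.dvd.mul_right ((hbridge p e m hmc).mpr this) k.toNat
  -- m * k ∣ n
  have hMKN : m.toNat * k.toNat ∣ n.toNat := by
    refine aux_nat_dvd (Nat.mul_ne_zero hMne hKne) hNne ?_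
    intro p e hp he hpe
    obtain ⟨q, hqV, hqset⟩ := hVmem p hp e he
    have hq_cn : q.asIdeal ∣ c n := by
      by_cases hpk : p ∣ k.toNat
      · have hpm : ¬ p ∣ m.toNat := by
          intro hpm
          have := Nat.dvd_gcd hpk hpm
          rw [hcopnat] at this
          exact hp.one_lt.ne' (Nat.dvd_one.mp this)
        have hcop2 : Nat.Coprime (p ^ e) m.toNat :=
          Nat.Coprime.pow_left e ((Nat.Prime.coprime_iff_not_dvd hp).mpr hpm)
        have hpek : p ^ e ∣ k.toNat := hcop2.dvd_of_dvd_mul_left hpe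
        have hqk : q.asIdeal ∣ c k :=
          (hcdvd q p e hqV hqset k hk).mpr ((hbridge p e k hkc).mp hpek)
        exact (hqk.mul_left (c m)).trans hdvd2
      · have hcop2 : Nat.Coprime (p ^ e) k.toNat :=
          Nat.Coprime.pow_left e ((Nat.Prime.coprime_iff_not_dvd hp).mpr hpk)
        have hpem : p ^ e ∣ m.toNat := hcop2.dvd_of_dvd_mul_right hpe
        have hqm : q.asIdeal ∣ c m :=
          (hcdvd q p e hqV hqset m hm).mpr ((hbridge p e m hmc).mp hpem)
        exact (hqm.mul_right (c k)).trans hdvd2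
    exact (hbridge p e n hnc).mpr ((hcdvd q p e hqV hqset n hn).mp hq_cn)
  have hfin : n.toNat = m.toNat * k.toNat := Nat.dvd_antisymm hNMK hMKN
  calc n = (n.toNat : ℤ) := hnc.symm
  _ = ((m.toNat * k.toNat : ℕ) : ℤ) := by rw [hfin]
  _ = (m.toNat : ℤ) * (k.toNat : ℤ) := by push_cast; ring
  _ = m * k := by rw [hmc, hkc]
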